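/- arXiv:2112.05263 — 2 statements merged into one kernel-verified Lean document; each statement's English description precedes it below -/
import Mathlib

section
/- For the three-hop line network with all edge capacities equal to C, HD optimal value t*_HD = (C - 4λ_min)/8, and FD optimal value t*_FD = (C - 2λ_min)/5 if λ_min ≤ C/7 and (C - 3λ_min)/4 otherwise, where each t* is computed as min_k (1 - λ_min G_{k,:} C^{-1} F 1)/(G_{k,:} C^{-1} h̃) with h̃ = (1,3,2,3,3)^T, F^T = [[1,0,0,0,0],[0,1,1,0,0],[0,1,0,1,1]], G_HD = [[1,1,0,0,0],[0,1,1,1,0],[0,0,0,1,1]], G_FD = [[1,1,0,0,0],[0,0,1,1,0],[0,0,0,0,1]]. -/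
open Finset

/-- Routing matrix of the three-hop line network (edges × UEs). -/
def lineF : Matrix (Fin 5) (Fin 3) ℝ :=
  !![1,0,0; 0,1,1; 0,1,0; 0,0,1; 0,0,1]

/-- HD scheduling matrix. -/
def lineGHD : Matrix (Fin 3) (Fin 5) ℝ :=
  !![1,1,0,0,0; 0,1,1,1,0; 0,0,0,1,1]

/-- FD scheduling matrix. -/
def lineGFD : Matrix (Fin 3) (Fin 5) ℝ :=
  !![1,1,0,0,0; 0,0,1,1,0; 0,0,0,0,1]

/-- Vector `h̃` of worst-case hop counts per edge. -/
def lineH : Fin 5 → ℝ := ![1,3,2,3,3]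

lemma inf3_eq (f : Fin 3 → ℝ) :
    Finset.univ.inf' Finset.univ_nonempty f = min (f 0) (min (f 1) (f 2)) := by
  apply le_antisymm
  · exact le_min (Finset.inf'_le _ (Finset.mem_univ 0))
      (le_min (Finset.inf'_le _ (Finset.mem_univ 1)) (Finset.inf'_le _ (Finset.mem_univ 2)))
  · apply Finset.le_inf'
    intro i _
    fin_cases i
    · exact min_le_left _ _
    · exact le_trans (min_le_right _ _) (min_le_left _ _)
    · exact le_trans (min_le_right _ _) (min_le_right _ _)

/-- For the three-hop line network with all edge capacities `C`,
`t*_HD = (C - 4λ_min)/8` and `t*_FD = (C - 2λ_min)/5` if `λ_min ≤ C/7`,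
`(C - 3λ_min)/4` otherwise, where each `t*` is
`min_k (1 - λ_min G_k C⁻¹ F 1)/(G_k C⁻¹ h̃)`. -/
theorem three_hop_line_t_star
    (C lam : ℝ) (hC : 0 < C) (hlam0 : 0 ≤ lam) (hlam : lam < C / 4) :
    (Finset.univ.inf' Finset.univ_nonempty
      (fun k : Fin 3 =>
        (1 - lam * ∑ v, lineGHD k v * (∑ m, lineF v m) / C) /
          (∑ v, lineGHD k v * lineH v / C)) = (C - 4 * lam) / 8) ∧
    (Finset.univ.inf' Finset.univ_nonempty
      (fun k : Fin 3 =>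
        (1 - lam * ∑ v, lineGFD k v * (∑ m, lineF v m) / C) /
          (∑ v, lineGFD k v * lineH v / C)) =
        if lam ≤ C / 7 then (C - 2 * lam) / 5 else (C - 3 * lam) / 4) := by
  have hC' : C ≠ 0 := ne_of_gt hC
  have e1 : (1 - lam * ∑ v, lineGHD 0 v * (∑ m, lineF v m) / C) /
      (∑ v, lineGHD 0 v * lineH v / C) = (C - 3 * lam) / 4 := by
    simp [lineGHD, lineF, lineH, Fin.sum_univ_succ]
    field_simp
    try ring
  have e2 : (1 - lam * ∑ v, lineGHD 1 v * (∑ m, lineF v m) / C) /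
      (∑ v, lineGHD 1 v * lineH v / C) = (C - 4 * lam) / 8 := by
    simp [lineGHD, lineF, lineH, Fin.sum_univ_succ]
    field_simp
    try ring
  have e3 : (1 - lam * ∑ v, lineGHD 2 v * (∑ m, lineF v m) / C) /
      (∑ v, lineGHD 2 v * lineH v / C) = (C - 2 * lam) / 6 := by
    simp [lineGHD, lineF, lineH, Fin.sum_univ_succ]
    field_simp
    try ring
  have g1 : (1 - lam * ∑ v, lineGFD 0 v * (∑ m, lineF v m) / C) /
      (∑ v, lineGFD 0 v * lineH v / C) = (C - 3 * lam) / 4 := by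
    simp [lineGFD, lineF, lineH, Fin.sum_univ_succ]
    field_simp
    try ring
  have g2 : (1 - lam * ∑ v, lineGFD 1 v * (∑ m, lineF v m) / C) /
      (∑ v, lineGFD 1 v * lineH v / C) = (C - 2 * lam) / 5 := by
    simp [lineGFD, lineF, lineH, Fin.sum_univ_succ]
    field_simp
    try ring
  have g3 : (1 - lam * ∑ v, lineGFD 2 v * (∑ m, lineF v m) / C) /
      (∑ v, lineGFD 2 v * lineH v / C) = (C - lam) / 3 := by
    simp [lineGFD, lineF, lineH, Fin.sum_univ_succ]
    field_simp
    try ring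
  rw [inf3_eq, inf3_eq]
  simp only [e1, e2, e3, g1, g2, g3]
  constructor
  · rw [min_eq_left (show (C - 4 * lam) / 8 ≤ (C - 2 * lam) / 6 by nlinarith),
      min_eq_right (show (C - 4 * lam) / 8 ≤ (C - 3 * lam) / 4 by nlinarith)]
  · rcases le_or_gt lam (C / 7) with h | h
    · rw [if_pos h, min_eq_left (show (C - 2 * lam) / 5 ≤ (C - lam) / 3 by nlinarith),
        min_eq_right (show (C - 2 * lam) / 5 ≤ (C - 3 * lam) / 4 by nlinarith)]
    · rw [if_neg (not_le.mpr h),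
        min_eq_left (le_min (show (C - 3 * lam) / 4 ≤ (C - 2 * lam) / 5 by nlinarith)
          (show (C - 3 * lam) / 4 ≤ (C - lam) / 3 by nlinarith))]
end

section
/- In the optimal solution of the delay-minimization LP, the arrival-rate vector λ* = λ_min·1 is not unique: for any non-bottleneck UE m (i.e., with c_v μ*_v - λ_min(F1)_v > t* h_m for all edges v on its route), any λ_m with λ_min < λ_m < min over edges v on route m of (c_v μ*_v - t* h̃_v)/((F1)_v) keeps all constraints satisfied with the same optimal t*, hence is also optimal. -/
open Finset

/-- Non-uniqueness of the optimal arrival-rate vector: if `(t*, λ_min·1, μ*)` is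
feasible and UE `m₀` is non-bottleneck (strict slack on every edge of its route),
then any `λ_{m₀}` with
`λ_min < λ_{m₀} < min_{v ∈ R(m₀)} (c_v μ*_v - t* h̃_v)/((F1)_v)` keeps all
constraints satisfied with the same `t*`, hence is also optimal. -/
theorem arrival_rate_not_unique
    {E M K : Type*} [Fintype E] [Fintype M] [Fintype K] [DecidableEq M]
    (F : E → M → ℝ) (hF : ∀ v m, F v m = 0 ∨ F v m = 1)
    (G : K → E → ℝ) (hG : ∀ k v, 0 ≤ G k v)
    (c : E → ℝ) (hc : ∀ v, 0 < c v)
    (h : M → ℝ) (hh : ∀ m, 1 ≤ h m)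
    (htilde : E → ℝ) (hht : ∀ v m, F v m = 1 → h m ≤ htilde v)
    (lamMin tstar : ℝ) (hlamMin : 0 < lamMin) (htstar : 0 ≤ tstar)
    (μ : E → ℝ) (hμ : ∀ v, 0 ≤ μ v ∧ μ v ≤ 1)
    (hsched : ∀ k, ∑ v, G k v * μ v ≤ 1)
    (hfeas : ∀ m, ∀ v, F v m = 1 →
      c v * μ v - (∑ m', F v m' * lamMin) ≥ tstar * h m)
    (m₀ : M)
    (hslack : ∀ v, F v m₀ = 1 →
      c v * μ v - lamMin * (∑ m', F v m') > tstar * h m₀)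
    (lam₀ : ℝ) (hlo : lamMin < lam₀)
    (hhi : ∀ v, F v m₀ = 1 →
      lam₀ < (c v * μ v - tstar * htilde v) / (∑ m', F v m')) :
    (∀ m, lamMin ≤ Function.update (fun _ : M => lamMin) m₀ lam₀ m) ∧
    (∀ m, ∀ v, F v m = 1 →
      c v * μ v - (∑ m', F v m' * Function.update (fun _ : M => lamMin) m₀ lam₀ m')
        ≥ tstar * h m) := by
  set lam : M → ℝ := Function.update (fun _ : M => lamMin) m₀ lam₀ with hlam
  have hle : ∀ m, lamMin ≤ lam m := by
    intro m
    by_cases hm : m = m₀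
    · simp [hlam, hm, hlo.le]
    · simp [hlam, Function.update_of_ne hm]
  have hub : ∀ m, lam m ≤ lam₀ := by
    intro m
    by_cases hm : m = m₀
    · simp [hlam, hm]
    · simp [hlam, Function.update_of_ne hm, hlo.le]
  refine ⟨hle, ?_⟩
  intro m v hFvm
  rcases hF v m₀ with h0 | h1
  · -- m₀ not on this edge: sum unchanged
    have : ∑ m', F v m' * lam m' = ∑ m', F v m' * lamMin := by
      apply Finset.sum_congr rfl
      intro m' _
      by_cases hm' : m' = m₀
      · simp [hm', h0]
      · simp [hlam, Function.update_of_ne hm']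
    rw [this]
    exact hfeas m v hFvm
  · -- m₀ on this edge: use hhi
    have hSpos : 0 < ∑ m', F v m' := by
      have := Finset.single_le_sum (f := fun m' => F v m')
        (fun m' _ => by rcases hF v m' with h' | h' <;> simp [h']) (Finset.mem_univ m₀)
      simp only [h1] at this; linarith
    have hsum : ∑ m', F v m' * lam m' ≤ (∑ m', F v m') * lam₀ := by
      rw [Finset.sum_mul]
      apply Finset.sum_le_sum
      intro m' _
      have hF0 : 0 ≤ F v m' := by rcases hF v m' with h' | h' <;> simp [h']
      exact mul_le_mul_of_nonneg_left (hub m') hF0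
    have hkey : lam₀ * (∑ m', F v m') < c v * μ v - tstar * htilde v :=
      (lt_div_iff₀ hSpos).mp (hhi v h1)
    have hmh : tstar * h m ≤ tstar * htilde v :=
      mul_le_mul_of_nonneg_left (hht v m hFvm) htstar
    nlinarith [hsum, hkey, hmh]
end
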